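/- Let f ∈ L¹[a,b] with F a primitive of f (F(x) = F(a) + ∫_a^x f), and let g : [a,b] → ℝ be piecewise absolutely continuous with respect to a partition a = x₀ < x₁ < ⋯ < x_m = b, meaning g restricted to each open subinterval extends to an absolutely continuous function on [x_i, x_{i+1}] with one-sided limits g(x_i⁺), g(x_{i+1}⁻). Then ∫_a^b f(σ) g(σ) dσ = Σ_{i=0}^{m-1} [F(x_{i+1}) g(x_{i+1}⁻) − F(x_i) g(x_i⁺)] − ∫_a^b F(σ) g'(σ) dσ, where g' denotes the almost-everywhere derivative of g. -/

import Mathlib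

open MeasureTheory Filter

lemma fubini_ibp (c d : ℝ) (f g : ℝ → ℝ)
    (hf : IntegrableOn f (Set.Ioc c d)) (hg : IntegrableOn g (Set.Ioc c d)) :
    (∫ σ in Set.Ioc c d, f σ * (∫ τ in Set.Ioc c σ, g τ))
      + ∫ σ in Set.Ioc c d, (∫ τ in Set.Ioc c σ, f τ) * g σ
    = (∫ σ in Set.Ioc c d, f σ) * (∫ τ in Set.Ioc c d, g τ) := by
  set μ := volume.restrict (Set.Ioc c d) with hμ
  have hfμ : Integrable f μ := hf
  have hgμ : Integrable g μ := hg
  have hprod : Integrable (fun z : ℝ × ℝ => f z.1 * g z.2) (μ.prod μ) :=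
    hfμ.mul_prod hgμ
  set A : Set (ℝ × ℝ) := {z | z.2 ≤ z.1} with hA
  have hAm : MeasurableSet A := measurableSet_le measurable_snd measurable_fst
  -- restriction facts
  have hres : ∀ σ ∈ Set.Ioc c d, μ.restrict (Set.Iic σ) = volume.restrict (Set.Ioc c σ) := by
    intro σ hσ
    rw [hμ, Measure.restrict_restrict measurableSet_Iic]
    congr 1
    rw [Set.Iic_inter_Ioc_of_le hσ.2]  -- guess
  have hres' : ∀ σ ∈ Set.Ioc c d, μ.restrict (Set.Iio σ) = volume.restrict (Set.Ioo c σ) := by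
    intro σ hσ
    rw [hμ, Measure.restrict_restrict measurableSet_Iio]
    congr 1
    ext τ
    simp only [Set.mem_inter_iff, Set.mem_Iio, Set.mem_Ioc, Set.mem_Ioo]
    constructor
    · rintro ⟨h1, h2, h3⟩; exact ⟨h2, h1⟩
    · rintro ⟨h1, h2⟩; exact ⟨h2, h1, h2.le.trans hσ.2⟩
  have h1 : (∫ z in A, f z.1 * g z.2 ∂(μ.prod μ))
      = ∫ σ in Set.Ioc c d, f σ * (∫ τ in Set.Ioc c σ, g τ) := by
    rw [← integral_indicator hAm, integral_prod _ (hprod.indicator hAm)]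
    refine setIntegral_congr_fun measurableSet_Ioc (fun σ hσ => ?_)
    have : ∀ τ : ℝ, A.indicator (fun z : ℝ × ℝ => f z.1 * g z.2) (σ, τ)
        = (Set.Iic σ).indicator (fun τ => f σ * g τ) τ := by
      intro τ
      by_cases h : τ ≤ σ <;> simp [hA, Set.indicator_apply, h]
    simp_rw [this]
    rw [integral_indicator measurableSet_Iic, hres σ hσ,
      integral_const_mul]
  have h2 : (∫ z in Aᶜ, f z.1 * g z.2 ∂(μ.prod μ))
      = ∫ σ in Set.Ioc c d, (∫ τ in Set.Ioc c σ, f τ) * g σ := by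
    rw [← integral_indicator hAm.compl]
    rw [← integral_prod_swap]
    have hint := (hprod.indicator hAm.compl).swap
    rw [Function.comp_def] at hint
    rw [integral_prod _ hint]
    refine setIntegral_congr_fun measurableSet_Ioc (fun σ hσ => ?_)
    have : ∀ τ : ℝ, Aᶜ.indicator (fun z : ℝ × ℝ => f z.1 * g z.2) ((σ, τ) : ℝ × ℝ).swap
        = (Set.Iio σ).indicator (fun τ => f τ * g σ) τ := by
      intro τ
      by_cases h : τ < σ <;>
        simp [hA, Set.indicator_apply, Prod.swap, h, not_lt.mp, not_le.mpr]
    simp_rw [this]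
    rw [integral_indicator measurableSet_Iio, hres' σ hσ,
      integral_mul_const]
    congr 1
    exact setIntegral_congr_set Ioo_ae_eq_Ioc
  rw [← h1, ← h2, integral_add_compl hAm hprod, integral_prod_mul]

lemma ibp_interval (c d : ℝ) (hcd : c < d) (f F g g' : ℝ → ℝ) (gpc gmd : ℝ)
    (hf : IntegrableOn f (Set.Icc c d)) (hg' : IntegrableOn g' (Set.Icc c d))
    (hFdef : ∀ y ∈ Set.Icc c d, F y = F c + ∫ σ in c..y, f σ)
    (hg : ∀ y ∈ Set.Ioo c d, g y = gpc + ∫ σ in c..y, g' σ)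
    (hgmd : gmd = gpc + ∫ σ in c..d, g' σ) :
    IntegrableOn (fun σ => f σ * g σ) (Set.Ioc c d) ∧
      ∫ σ in Set.Ioc c d, f σ * g σ
        = F d * gmd - F c * gpc - ∫ σ in Set.Ioc c d, F σ * g' σ := by
  have hle : c ≤ d := hcd.le
  have hfI : IntegrableOn f (Set.Ioc c d) := hf.mono_set Set.Ioc_subset_Icc_self
  have hg'I : IntegrableOn g' (Set.Ioc c d) := hg'.mono_set Set.Ioc_subset_Icc_self
  -- the primitive of g' : Φ
  set Φ : ℝ → ℝ := fun σ => ∫ τ in Set.Ioc c σ, g' τ with hΦ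
  have hΦc : ContinuousOn Φ (Set.Icc c d) := intervalIntegral.continuousOn_primitive hg'
  have hFc : ContinuousOn F (Set.Icc c d) := by
    have : ContinuousOn (fun y => F c + ∫ t in Set.Ioc c y, f t) (Set.Icc c d) :=
      continuousOn_const.add (intervalIntegral.continuousOn_primitive hf)
    refine this.congr fun y hy => ?_
    rw [hFdef y hy, intervalIntegral.integral_of_le hy.1]
  -- key equalities
  have key1 : ∀ σ ∈ Set.Ioc c d, (∫ τ in Set.Ioc c σ, f τ) = F σ - F c := by
    intro σ hσ
    have h := hFdef σ ⟨hσ.1.le, hσ.2⟩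
    rw [intervalIntegral.integral_of_le hσ.1.le] at h
    linarith
  have keyF : (∫ τ in Set.Ioc c d, f τ) = F d - F c := by
    have h := hFdef d ⟨hle, le_refl d⟩
    rw [intervalIntegral.integral_of_le hle] at h
    linarith
  have keyG : Φ d = gmd - gpc := by
    rw [hgmd, hΦ]
    simp [intervalIntegral.integral_of_le hle]
  -- g equals gpc + Φ a.e. on Ioc c d
  have hgae : ∀ᵐ σ ∂(volume.restrict (Set.Ioc c d)), f σ * g σ = f σ * (gpc + Φ σ) := by
    have h1 : ∀ᵐ σ ∂(volume.restrict (Set.Ioo c d)), f σ * g σ = f σ * (gpc + Φ σ) := by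
      refine (ae_restrict_iff' measurableSet_Ioo).2 (ae_of_all _ fun σ hσ => ?_)
      rw [hg σ hσ, intervalIntegral.integral_of_le hσ.1.le]
    rwa [Measure.restrict_congr_set Ioo_ae_eq_Ioc] at h1
  have hint2 : IntegrableOn (fun σ => f σ * (gpc + Φ σ)) (Set.Ioc c d) := by
    have : IntegrableOn (fun σ => f σ * (gpc + Φ σ)) (Set.Icc c d) :=
      hf.mul_continuousOn (continuousOn_const.add hΦc) isCompact_Icc
    exact this.mono_set Set.Ioc_subset_Icc_self
  have hintfg : IntegrableOn (fun σ => f σ * g σ) (Set.Ioc c d) :=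
    (integrable_congr hgae).2 hint2
  refine ⟨hintfg, ?_⟩
  have hintFg' : IntegrableOn (fun σ => F σ * g' σ) (Set.Ioc c d) :=
    (IntegrableOn.continuousOn_mul hFc hg' isCompact_Icc).mono_set Set.Ioc_subset_Icc_self
  have hintfΦ : IntegrableOn (fun σ => f σ * Φ σ) (Set.Ioc c d) :=
    (hf.mul_continuousOn hΦc isCompact_Icc).mono_set Set.Ioc_subset_Icc_self
  -- main computation
  rw [integral_congr_ae hgae]
  simp_rw [mul_add]
  rw [integral_add (hfI.mul_const gpc) hintfΦ, integral_mul_const]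
  have hfub := fubini_ibp c d f g' hfI hg'I
  have hrw : ∫ σ in Set.Ioc c d, (∫ τ in Set.Ioc c σ, f τ) * g' σ
      = ∫ σ in Set.Ioc c d, (F σ - F c) * g' σ :=
    setIntegral_congr_fun measurableSet_Ioc fun σ hσ => by rw [key1 σ hσ]
  have hexp : ∫ σ in Set.Ioc c d, (F σ - F c) * g' σ
      = (∫ σ in Set.Ioc c d, F σ * g' σ) - F c * ∫ σ in Set.Ioc c d, g' σ := by
    simp_rw [sub_mul]
    rw [integral_sub hintFg' (hg'I.const_mul (F c)), integral_const_mul]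
  rw [hrw, hexp] at hfub
  have hΦd : (∫ τ in Set.Ioc c d, g' τ) = gmd - gpc := keyG
  rw [keyF, hΦd] at hfub
  simp only [hΦ] at hfub ⊢
  rw [keyF]
  linarith [hfub]


/-- Integration by parts for a piecewise absolutely continuous function `g`
(with one-sided values `gp i = g(xᵢ⁺)`, `gm (i+1) = g(x_{i+1}⁻)`) against an
integrable `f` with primitive `F`. -/
theorem ibp_piecewise_AC
    (a b : ℝ) (hab : a < b) (m : ℕ) (hm : 0 < m)
    (x : ℕ → ℝ) (hx0 : x 0 = a) (hxm : x m = b)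
    (hxmono : ∀ i < m, x i < x (i + 1))
    (f F g g' : ℝ → ℝ) (gp gm : ℕ → ℝ)
    (hf : IntegrableOn f (Set.Icc a b))
    (hF : ∀ y ∈ Set.Icc a b, F y = F a + ∫ σ in a..y, f σ)
    (hg' : IntegrableOn g' (Set.Icc a b))
    (hpiece : ∀ i < m, ∀ y ∈ Set.Ioo (x i) (x (i + 1)),
        g y = gp i + ∫ σ in (x i)..y, g' σ)
    (hgm : ∀ i < m, gm (i + 1) = gp i + ∫ σ in (x i)..(x (i + 1)), g' σ) :
    ∫ σ in a..b, f σ * g σ =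
      (∑ i ∈ Finset.range m, (F (x (i + 1)) * gm (i + 1) - F (x i) * gp i))
        - ∫ σ in a..b, F σ * g' σ := by
  -- monotonicity of the partition
  have hmono : ∀ i j, i ≤ j → j ≤ m → x i ≤ x j := by
    intro i j hij hjm
    induction j with
    | zero => simp_all
    | succ k ih =>
      rcases Nat.lt_or_ge i (k+1) with h | h
      · exact le_trans (ih (Nat.lt_succ_iff.mp h) (le_trans (Nat.le_succ k) hjm))
          (hxmono k (Nat.lt_of_lt_of_le (Nat.lt_succ_self k) hjm)).le
      · have : i = k + 1 := le_antisymm hij h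
        simp [this]
  have hmem : ∀ i ≤ m, x i ∈ Set.Icc a b := fun i hi =>
    ⟨hx0 ▸ hmono 0 i (Nat.zero_le i) hi, hxm ▸ hmono i m hi le_rfl⟩
  have hsub : ∀ i < m, Set.Icc (x i) (x (i+1)) ⊆ Set.Icc a b := fun i hi =>
    Set.Icc_subset_Icc (hmem i hi.le).1 (hmem (i+1) hi).2
  have hFc : ContinuousOn F (Set.Icc a b) := by
    have : ContinuousOn (fun y => F a + ∫ t in Set.Ioc a y, f t) (Set.Icc a b) :=
      continuousOn_const.add (intervalIntegral.continuousOn_primitive hf)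
    refine this.congr fun y hy => ?_
    rw [hF y hy, intervalIntegral.integral_of_le hy.1]
  have hFg' : IntegrableOn (fun σ => F σ * g' σ) (Set.Icc a b) :=
    IntegrableOn.continuousOn_mul hFc hg' isCompact_Icc
  -- interval integrability of f on any [a, y]
  have hfay : ∀ y ∈ Set.Icc a b, IntervalIntegrable f volume a y := fun y hy => by
    rw [intervalIntegrable_iff_integrableOn_Ioc_of_le hy.1]
    exact (hf.mono_set (Set.Icc_subset_Icc le_rfl hy.2)).mono_set
      Set.Ioc_subset_Icc_self
  -- per-interval IBP
  have key : ∀ i < m,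
      IntegrableOn (fun σ => f σ * g σ) (Set.Ioc (x i) (x (i+1))) ∧
        ∫ σ in Set.Ioc (x i) (x (i+1)), f σ * g σ
          = F (x (i+1)) * gm (i+1) - F (x i) * gp i
            - ∫ σ in Set.Ioc (x i) (x (i+1)), F σ * g' σ := by
    intro i hi
    have hcd := hxmono i hi
    have hFdefi : ∀ y ∈ Set.Icc (x i) (x (i+1)), F y = F (x i) + ∫ σ in (x i)..y, f σ := by
      intro y hy
      have hyab : y ∈ Set.Icc a b := hsub i hi hy
      have h1 := hF y hyab
      have h2 := hF (x i) (hmem i hi.le)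
      have h3 : (∫ σ in a..y, f σ) - ∫ σ in a..(x i), f σ = ∫ σ in (x i)..y, f σ :=
        intervalIntegral.integral_interval_sub_left (hfay y hyab) (hfay (x i) (hmem i hi.le))
      linarith
    have := ibp_interval (x i) (x (i+1)) hcd f F g g' (gp i) (gm (i+1))
      (hf.mono_set (hsub i hi)) (hg'.mono_set (hsub i hi)) hFdefi
      (hpiece i hi) (hgm i hi)
    exact this
  -- interval integrability on each piece
  have hfg_ii : ∀ i < m, IntervalIntegrable (fun σ => f σ * g σ) volume (x i) (x (i+1)) :=
    fun i hi => by
      rw [intervalIntegrable_iff_integrableOn_Ioc_of_le (hxmono i hi).le]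
      exact (key i hi).1
  have hFg'_ii : ∀ i < m, IntervalIntegrable (fun σ => F σ * g' σ) volume (x i) (x (i+1)) :=
    fun i hi => by
      rw [intervalIntegrable_iff_integrableOn_Ioc_of_le (hxmono i hi).le]
      exact (hFg'.mono_set (hsub i hi)).mono_set Set.Ioc_subset_Icc_self
  rw [← hx0, ← hxm,
    ← intervalIntegral.sum_integral_adjacent_intervals hfg_ii,
    ← intervalIntegral.sum_integral_adjacent_intervals hFg'_ii,
    ← Finset.sum_sub_distrib]
  refine Finset.sum_congr rfl fun i hi => ?_
  have hi' := Finset.mem_range.mp hi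
  rw [intervalIntegral.integral_of_le (hxmono i hi').le,
    intervalIntegral.integral_of_le (hxmono i hi').le,
    (key i hi').2]
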